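/- Let n > 0 and suppose S : [0,∞) → (0,∞) is twice differentiable, convex (S'' ≥ 0), with S(0)=1, and satisfies x(1+cx)(1+2cx)S''(x) + (4(n+c)x(1+cx)+1)S'(x) + 2n(1+2cx)S(x) = 0 for x > 0, where c ≥ 0. Then S(x) ≤ (4(n+c)x(1+cx) + 1)^{−n/(2(n+c))} for all x ≥ 0. -/

import Mathlib

theorem stmt_18 (n c : ℝ) (hn : 0 < n) (hc : 0 ≤ c) (S : ℝ → ℝ)
    (hpos : ∀ x, 0 ≤ x → 0 < S x)
    (hS0 : S 0 = 1)
    (hdiff : ∀ x, 0 ≤ x → DifferentiableAt ℝ S x ∧ DifferentiableAt ℝ (deriv S) x)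
    (hconv : ∀ x, 0 ≤ x → 0 ≤ deriv (deriv S) x)
    (hode : ∀ x, 0 < x →
      x * (1 + c * x) * (1 + 2 * c * x) * deriv (deriv S) x +
        (4 * (n + c) * x * (1 + c * x) + 1) * deriv S x +
        2 * n * (1 + 2 * c * x) * S x = 0) :
    ∀ x, 0 ≤ x →
      S x ≤ (4 * (n + c) * x * (1 + c * x) + 1) ^ (-(n / (2 * (n + c)))) := by
  intro x hx
  have hnc : 0 < n + c := by linarith
  set p : ℝ := n / (2 * (n + c)) with hp
  set Q : ℝ → ℝ := fun y => 4 * (n + c) * y * (1 + c * y) + 1 with hQdef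
  have hQpos : ∀ y, 0 ≤ y → 0 < Q y := by
    intro y hy
    have h1 : 0 ≤ 1 + c * y := by nlinarith
    have : 0 ≤ 4 * (n + c) * y * (1 + c * y) := by positivity
    simp only [hQdef]; linarith
  have hQd : ∀ y, HasDerivAt Q (4 * (n + c) * (1 + 2 * c * y)) y := by
    intro y
    have h := (((hasDerivAt_id y).mul
        (((hasDerivAt_id y).const_mul c).const_add 1)).const_mul
        (4 * (n + c))).add_const 1
    have hfun : Q = fun y : ℝ => 4 * (n + c) * (id y * (1 + c * id y)) + 1 := by
      funext z; simp [hQdef]; ring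
    rw [hfun]
    exact h.congr_deriv (by simp only [id_eq]; ring)
  set G : ℝ → ℝ := fun y => S y * Q y ^ p with hGdef
  have hGd : ∀ y, 0 ≤ y → HasDerivAt G
      (deriv S y * Q y ^ p + S y * (4 * (n + c) * (1 + 2 * c * y) * p * Q y ^ (p - 1))) y := by
    intro y hy
    exact ((hdiff y hy).1.hasDerivAt).mul
      ((hQd y).rpow_const (Or.inl (ne_of_gt (hQpos y hy))))
  have hG0 : G 0 = 1 := by
    simp [hGdef, hQdef, hS0]
  have key : G x ≤ G 0 := by
    have hanti : AntitoneOn G (Set.Icc 0 x) := by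
      apply antitoneOn_of_deriv_nonpos (convex_Icc 0 x)
      · intro y hy
        exact ((hGd y hy.1).differentiableAt).continuousAt.continuousWithinAt
      · intro y hy
        rw [interior_Icc] at hy
        exact ((hGd y (le_of_lt hy.1)).differentiableAt).differentiableWithinAt
      · intro y hy
        rw [interior_Icc] at hy
        have hy0 : 0 < y := hy.1
        rw [(hGd y hy0.le).deriv]
        have hQy := hQpos y hy0.le
        -- rewrite Q y ^ p = Q y ^ (p-1) * Q y
        have hsplit : Q y ^ p = Q y ^ (p - 1) * Q y := by
          rw [← Real.rpow_add_one (ne_of_gt hQy) (p - 1)]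
          ring_nf
        rw [hsplit]
        have hpq : p * (4 * (n + c)) = 2 * n := by
          rw [hp]
          field_simp
          norm_num
        have hode' := hode y hy0
        have hSy : deriv S y * Q y + 2 * n * (1 + 2 * c * y) * S y =
            -(y * (1 + c * y) * (1 + 2 * c * y) * deriv (deriv S) y) := by
          simp only [hQdef]; linarith
        have hfac : 0 ≤ y * (1 + c * y) * (1 + 2 * c * y) := by
          have h1 : 0 ≤ 1 + c * y := by nlinarith
          have h2 : 0 ≤ 1 + 2 * c * y := by nlinarith
          positivity
        have hS'' := hconv y hy0.le
        have hinner : deriv S y * Q y + 2 * n * (1 + 2 * c * y) * S y ≤ 0 := by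
          rw [hSy]
          exact neg_nonpos_of_nonneg (mul_nonneg hfac hS'')
        have hpow : 0 < Q y ^ (p - 1) := Real.rpow_pos_of_pos hQy _
        have : deriv S y * (Q y ^ (p - 1) * Q y) +
            S y * (4 * (n + c) * (1 + 2 * c * y) * p * Q y ^ (p - 1)) =
            Q y ^ (p - 1) * (deriv S y * Q y +
              (p * (4 * (n + c))) * (1 + 2 * c * y) * S y) := by ring
        rw [this, hpq]
        have : deriv S y * Q y + 2 * n * (1 + 2 * c * y) * S y =
            deriv S y * Q y + 2 * n * (1 + 2 * c * y) * S y := rfl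
        apply mul_nonpos_of_nonneg_of_nonpos hpow.le
        linarith [hinner]
      done
    exact hanti (Set.left_mem_Icc.mpr hx) (Set.right_mem_Icc.mpr hx) hx
  rw [hG0] at key
  have hQx := hQpos x hx
  have hQp : 0 < Q x ^ p := Real.rpow_pos_of_pos hQx p
  have hfin : S x ≤ (Q x ^ p)⁻¹ := by
    rw [← one_div, le_div_iff₀ hQp]
    exact key
  calc S x ≤ (Q x ^ p)⁻¹ := hfin
    _ = Q x ^ (-p) := (Real.rpow_neg hQx.le p).symm
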